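/- Let 1 ≤ ℓ ≤ m−1 and let Π be a hyperplane of the Plücker projective space P(⋀^ℓ V). Let a be the maximum over all (m−1)-dimensional subspaces W of V of |{L ∈ G(ℓ,W) : L lies on Π}|. Then (q^{m−ℓ} − 1)·|Π ∩ G(ℓ,V)| ≤ (q^m − 1)·a. Furthermore, if |{L ∈ G(ℓ,W) : L lies on Π}| = a for every (m−1)-dimensional subspace W of V, then (q^{m−ℓ} − 1)·|Π ∩ G(ℓ,V)| = (q^m − 1)·a. -/

import Mathlib

open Module

/-- The Gaussian binomial coefficient `[m ℓ]_q`, as a rational number. -/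
noncomputable def gaussBinom (q m l : ℕ) : ℚ :=
  ∏ i ∈ Finset.range l, ((q : ℚ) ^ (m - i) - 1) / ((q : ℚ) ^ (i + 1) - 1)

/-- `e(ℓ,m) = [m ℓ]_q − q^{ℓ(m−ℓ)}`. -/
noncomputable def eG (q l m : ℕ) : ℚ :=
  gaussBinom q m l - (q : ℚ) ^ (l * (m - l))

/-- `e'(ℓ,m) = [m ℓ]_q − q^{ℓ(m−ℓ)} − q^{ℓ(m−ℓ)−2}`. -/
noncomputable def eG' (q l m : ℕ) : ℚ :=
  gaussBinom q m l - (q : ℚ) ^ (l * (m - l)) - (q : ℚ) ^ (l * (m - l) - 2)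

variable (F : Type*) [Field F] (V : Type*) [AddCommGroup V] [Module F V]

/-- The wedge product `v₁ ∧ ⋯ ∧ vₙ` as an element of the `n`-th exterior power. -/
noncomputable def wedge (n : ℕ) (v : Fin n → V) : ⋀[F]^n V :=
  ⟨ExteriorAlgebra.ιMulti F n v, ExteriorAlgebra.ιMulti_range F n (Set.mem_range_self v)⟩

/-- The product `w₁ ∧ ⋯ ∧ w_k ∧ x` for `x` in the `l`-th exterior power, landing in the
`n`-th exterior power, where `k + l = n`. -/
noncomputable def mulWedge (k l n : ℕ) (h : k + l = n) (w : Fin k → V) (x : ⋀[F]^l V) :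
    ⋀[F]^n V :=
  ⟨ExteriorAlgebra.ιMulti F k w * (x : ExteriorAlgebra F V), by
    subst h
    have hmem : ExteriorAlgebra.ιMulti F k w * (x : ExteriorAlgebra F V) ∈
        (LinearMap.range (ExteriorAlgebra.ι F : V →ₗ[F] ExteriorAlgebra F V)) ^ k *
          (LinearMap.range (ExteriorAlgebra.ι F : V →ₗ[F] ExteriorAlgebra F V)) ^ l :=
      Submodule.mul_mem_mul (ExteriorAlgebra.ιMulti_range F k (Set.mem_range_self w)) x.2
    rw [← pow_add] at hmem
    exact hmem⟩

/-- An `ℓ`-dimensional subspace `L` of `V` lies on the hyperplane of the Plücker projective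
space determined by the nonzero functional `φ : ⋀[F]^ℓ V →ₗ[F] F` if
`φ (ω₁ ∧ ⋯ ∧ ω_ℓ) = 0` for some (equivalently, every) basis `ω₁, …, ω_ℓ` of `L`. -/
def LiesOn (l : ℕ) (φ : ⋀[F]^l V →ₗ[F] F) (L : Submodule F V) : Prop :=
  ∃ ω : Fin l → V, (∀ i, ω i ∈ L) ∧ LinearIndependent F ω ∧
    Submodule.span F (Set.range ω) = L ∧ φ (wedge F V l ω) = 0

/-- The hyperplane determined by `φ : ⋀[F]^ℓ V →ₗ[F] F` is decomposable if there exist vectors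
`w₁, …, w_{m−ℓ} ∈ V` and a nonzero linear functional `ψ : ⋀[F]^m V →ₗ[F] F` such that
`φ x = ψ (w₁ ∧ ⋯ ∧ w_{m−ℓ} ∧ x)` for all `x ∈ ⋀[F]^ℓ V`. -/
def IsDecomposable (m l : ℕ) (h : l ≤ m) (φ : ⋀[F]^l V →ₗ[F] F) : Prop :=
  ∃ (w : Fin (m - l) → V) (ψ : ⋀[F]^m V →ₗ[F] F), ψ ≠ 0 ∧
    ∀ x : ⋀[F]^l V, φ x = ψ (mulWedge F V (m - l) l m (Nat.sub_add_cancel h) w x)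

section CountingAux

open Module Submodule

private lemma natCard_setOf {α : Type*} [Fintype α] (p : α → Prop) [DecidablePred p] :
    Nat.card {x | p x} = (Finset.univ.filter p).card := by
  rw [Nat.card_eq_fintype_card]
  exact Fintype.card_subtype p

variable {K : Type*} [Field K] [Fintype K] {U : Type*} [AddCommGroup U] [Module K U]
  [FiniteDimensional K U]

private lemma card_lines (q : ℕ) (hq : Fintype.card K = q) :
    (q - 1) * Nat.card {L : Submodule K U | finrank K L = 1}
      = q ^ finrank K U - 1 := by
  classical
  have hfinU : Finite U := Module.finite_of_finite K
  have : Fintype U := Fintype.ofFinite U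
  have : Finite (Submodule K U) :=
    Finite.of_injective (fun W : Submodule K U => (W : Set U)) SetLike.coe_injective
  have : Fintype (Submodule K U) := Fintype.ofFinite _
  set s : Finset U := ({0} : Finset U)ᶜ with hs
  set t : Finset (Submodule K U) := Finset.univ.filter (fun L => finrank K L = 1) with ht
  have hmem : ∀ v ∈ s, Submodule.span K {v} ∈ t := by
    intro v hv
    simp only [hs, Finset.mem_compl, Finset.mem_singleton] at hv
    simp only [ht, Finset.mem_filter, Finset.mem_univ, true_and]
    exact finrank_span_singleton hv
  have hcard := Finset.card_eq_sum_card_fiberwise hmem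
  have hfib : ∀ L ∈ t, (s.filter fun v => Submodule.span K {v} = L).card = q - 1 := by
    intro L hL
    simp only [ht, Finset.mem_filter, Finset.mem_univ, true_and] at hL
    have hset : (s.filter fun v => Submodule.span K {v} = L)
        = Finset.univ.filter (fun v => v ∈ L ∧ ¬ v = 0) := by
      ext v
      simp only [Finset.mem_filter, Finset.mem_univ, true_and, hs, Finset.mem_compl,
        Finset.mem_singleton]
      constructor
      · rintro ⟨hv0, rfl⟩
        exact ⟨Submodule.mem_span_singleton_self v, hv0⟩
      · rintro ⟨hvL, hv0⟩
        refine ⟨hv0, Submodule.eq_of_le_of_finrank_eq ?_ ?_⟩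
        · rwa [Submodule.span_le, Set.singleton_subset_iff]
        · rw [finrank_span_singleton hv0, hL]
    rw [hset, ← Fintype.card_subtype]
    have e : {v : U // v ∈ L ∧ ¬ v = 0} ≃ {x : L // ¬ x = 0} :=
      { toFun := fun v => ⟨⟨v.1, v.2.1⟩, fun h => v.2.2 (congrArg Subtype.val h)⟩
        invFun := fun x => ⟨x.1.1, x.1.2, fun h => x.2 (Subtype.ext h)⟩
        left_inv := fun v => rfl
        right_inv := fun x => rfl }
    rw [Fintype.card_congr e, Fintype.card_subtype_compl, Fintype.card_subtype_eq]
    have : Fintype.card L = q := by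
      rw [card_eq_pow_finrank (K := K) (V := L), hL, pow_one, hq]
    rw [this]
  have hsum : s.card = t.card * (q - 1) := by
    rw [hcard, Finset.sum_congr rfl hfib, Finset.sum_const, smul_eq_mul]
  have hscard : s.card = q ^ finrank K U - 1 := by
    rw [hs, Finset.card_compl, Finset.card_singleton,
      card_eq_pow_finrank (K := K) (V := U), hq]
  have htn : Nat.card {L : Submodule K U | finrank K L = 1} = t.card := natCard_setOf _
  rw [htn, mul_comm, ← hsum, hscard]

private lemma card_lines_in (q : ℕ) (hq : Fintype.card K = q) (p : Submodule K U) :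
    (q - 1) * Nat.card {L : Submodule K U | finrank K L = 1 ∧ L ≤ p}
      = q ^ finrank K p - 1 := by
  have e : {L : Submodule K p | finrank K L = 1} ≃
      {L : Submodule K U | finrank K L = 1 ∧ L ≤ p} :=
    { toFun := fun L => ⟨L.1.map p.subtype, by
        simp only [Set.mem_setOf_eq]
        refine ⟨?_, Submodule.map_subtype_le p L.1⟩
        rw [Submodule.finrank_map_subtype_eq]
        exact L.2⟩
      invFun := fun L => ⟨L.1.comap p.subtype, by
        simp only [Set.mem_setOf_eq]
        have h1 : (L.1.comap p.subtype).map p.subtype = L.1 := by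
          rw [Submodule.map_comap_subtype]
          exact inf_eq_right.mpr L.2.2
        have h2 := Submodule.finrank_map_subtype_eq p (L.1.comap p.subtype)
        rw [h1] at h2
        rw [← h2]
        exact L.2.1⟩
      left_inv := fun L => by
        apply Subtype.ext
        simp [Submodule.comap_map_eq, Submodule.ker_subtype]
      right_inv := fun L => by
        apply Subtype.ext
        simp only [Submodule.map_comap_subtype]
        exact inf_eq_right.mpr L.2.2 }
  have hcl := card_lines (K := K) (U := ↥p) q hq
  have hce : Nat.card {L : Submodule K p | finrank K L = 1}
      = Nat.card {L : Submodule K U | finrank K L = 1 ∧ L ≤ p} := Nat.card_congr e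
  rw [← hce]
  exact hcl

private lemma card_hyperplanes_over (q : ℕ) (hq : Fintype.card K = q)
    (hU : 1 ≤ finrank K U) (L : Submodule K U) :
    (q - 1) * Nat.card {W : Submodule K U | finrank K W = finrank K U - 1 ∧ L ≤ W}
      = q ^ (finrank K U - finrank K L) - 1 := by
  have hann : ∀ W : Submodule K U,
      finrank K W + finrank K W.dualAnnihilator = finrank K U := by
    intro W
    have h1 := LinearEquiv.finrank_eq (R := K) (M := U ⧸ W)
      (N := ↥W.dualAnnihilator) (Subspace.quotEquivAnnihilator W)
    have h2 := Submodule.finrank_quotient_add_finrank W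
    omega
  have e : {W : Submodule K U | finrank K W = finrank K U - 1 ∧ L ≤ W} ≃
      {Φ : Submodule K (Module.Dual K U) | finrank K Φ = 1 ∧ Φ ≤ L.dualAnnihilator} :=
    { toFun := fun W => ⟨W.1.dualAnnihilator, by
        simp only [Set.mem_setOf_eq]
        constructor
        · have h1 := hann W.1
          have h2 := W.2.1
          omega
        · intro φ hφ
          rw [Submodule.mem_dualAnnihilator] at hφ ⊢
          exact fun x hx => hφ x (W.2.2 hx)⟩
      invFun := fun Φ => ⟨Φ.1.dualCoannihilator, by
        simp only [Set.mem_setOf_eq]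
        constructor
        · have h1 := Subspace.finrank_add_finrank_dualCoannihilator_eq Φ.1
          have h2 := Φ.2.1
          omega
        · intro x hx
          rw [Submodule.mem_dualCoannihilator]
          intro φ hφ
          exact (Submodule.mem_dualAnnihilator φ).mp (Φ.2.2 hφ) x hx⟩
      left_inv := fun W => Subtype.ext Subspace.dualAnnihilator_dualCoannihilator_eq
      right_inv := fun Φ => Subtype.ext Subspace.dualCoannihilator_dualAnnihilator_eq }
  have hfr : finrank K (L.dualAnnihilator) = finrank K U - finrank K L := by
    have := hann L
    omega
  rw [Nat.card_congr e, card_lines_in q hq L.dualAnnihilator, hfr]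

end CountingAux

/-- **Zanella-type counting lemma.** Let `1 ≤ ℓ ≤ m−1` and let `Π` be a hyperplane of the
Plücker projective space `P(⋀^ℓ V)`. If `a` is the maximum over all `(m−1)`-dimensional
subspaces `W` of `V` of `|{L ∈ G(ℓ,W) : L lies on Π}|`, then
`(q^{m−ℓ} − 1)·|Π ∩ G(ℓ,V)| ≤ (q^m − 1)·a`, with equality if the maximum is attained at
every `W`. -/
theorem stmt5 (F : Type*) [Field F] [Fintype F] (V : Type*) [AddCommGroup V] [Module F V]
    [FiniteDimensional F V] (q m l : ℕ) (hq : Fintype.card F = q)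
    (hV : finrank F V = m) (hl : 1 ≤ l) (hlm : l ≤ m - 1)
    (φ : ⋀[F]^l V →ₗ[F] F) (hφ : φ ≠ 0) (a : ℕ)
    (hub : ∀ W : Submodule F V, finrank F W = m - 1 →
      Nat.card {L : Submodule F V | finrank F L = l ∧ L ≤ W ∧ LiesOn F V l φ L} ≤ a)
    (hattain : ∃ W : Submodule F V, finrank F W = m - 1 ∧
      Nat.card {L : Submodule F V | finrank F L = l ∧ L ≤ W ∧ LiesOn F V l φ L} = a) :
    (q ^ (m - l) - 1) * Nat.card {L : Submodule F V | finrank F L = l ∧ LiesOn F V l φ L} ≤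
        (q ^ m - 1) * a ∧
      ((∀ W : Submodule F V, finrank F W = m - 1 →
          Nat.card {L : Submodule F V | finrank F L = l ∧ L ≤ W ∧ LiesOn F V l φ L} = a) →
        (q ^ (m - l) - 1) *
            Nat.card {L : Submodule F V | finrank F L = l ∧ LiesOn F V l φ L} =
          (q ^ m - 1) * a) := by
  classical
  have hm : 1 ≤ m := by omega
  subst hq
  have hfinV : Finite V := Module.finite_of_finite F
  have : Fintype V := Fintype.ofFinite V
  have : Finite (Submodule F V) :=
    Finite.of_injective (fun W : Submodule F V => (W : Set V)) SetLike.coe_injective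
  have : Fintype (Submodule F V) := Fintype.ofFinite _
  set q := Fintype.card F with hqdef
  set S : Finset (Submodule F V) :=
    Finset.univ.filter (fun L => finrank F L = l ∧ LiesOn F V l φ L) with hS
  set H : Finset (Submodule F V) :=
    Finset.univ.filter (fun W => finrank F W = m - 1) with hH
  have hScard : Nat.card {L : Submodule F V | finrank F L = l ∧ LiesOn F V l φ L}
      = S.card := natCard_setOf _
  have hHcount : (q - 1) * H.card = q ^ m - 1 := by
    have h := card_hyperplanes_over (U := V) q rfl (by omega) (⊥ : Submodule F V)
    rw [finrank_bot, hV, Nat.sub_zero] at h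
    have hseteq : {W : Submodule F V | finrank F W = m - 1 ∧ ⊥ ≤ W}
        = {W : Submodule F V | finrank F W = m - 1} := by
      ext W; simp
    rw [hseteq, natCard_setOf] at h
    exact h
  have hLcount : ∀ L ∈ S,
      (q - 1) * (H.filter (fun W => L ≤ W)).card = q ^ (m - l) - 1 := by
    intro L hL
    simp only [hS, Finset.mem_filter, Finset.mem_univ, true_and] at hL
    have h := card_hyperplanes_over (U := V) q rfl (by omega) L
    rw [hV, hL.1] at h
    have hfil : H.filter (fun W => L ≤ W)
        = Finset.univ.filter (fun W : Submodule F V => finrank F W = m - 1 ∧ L ≤ W) := by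
      rw [hH, Finset.filter_filter]
    have hnc : Nat.card {W : Submodule F V | finrank F W = m - 1 ∧ L ≤ W}
        = (H.filter (fun W => L ≤ W)).card := by
      rw [hfil, ← natCard_setOf]
    rw [hnc] at h
    exact h
  have hswap : ∑ W ∈ H, (S.filter (fun L => L ≤ W)).card
      = ∑ L ∈ S, (H.filter (fun W => L ≤ W)).card := by
    simp_rw [Finset.card_filter]
    exact Finset.sum_comm
  have hcW : ∀ W : Submodule F V, finrank F W = m - 1 →
      (S.filter (fun L => L ≤ W)).card
        = Nat.card {L : Submodule F V | finrank F L = l ∧ L ≤ W ∧ LiesOn F V l φ L} := by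
    intro W hW
    rw [natCard_setOf, hS, Finset.filter_filter]
    congr 1
    ext L
    simp only [Finset.mem_filter, Finset.mem_univ, true_and]
    tauto
  have hT1 : (q - 1) * (∑ W ∈ H, (S.filter (fun L => L ≤ W)).card)
      = (q ^ (m - l) - 1) * S.card := by
    rw [hswap, Finset.mul_sum, Finset.sum_congr rfl hLcount, Finset.sum_const,
      smul_eq_mul, mul_comm]
  constructor
  · rw [hScard]
    have hTle : (∑ W ∈ H, (S.filter (fun L => L ≤ W)).card) ≤ H.card * a := by
      calc (∑ W ∈ H, (S.filter (fun L => L ≤ W)).card) ≤ ∑ _W ∈ H, a := by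
            refine Finset.sum_le_sum ?_
            intro W hW
            simp only [hH, Finset.mem_filter, Finset.mem_univ, true_and] at hW
            rw [hcW W hW]
            exact hub W hW
        _ = H.card * a := by rw [Finset.sum_const, smul_eq_mul]
    calc (q ^ (m - l) - 1) * S.card
        = (q - 1) * (∑ W ∈ H, (S.filter (fun L => L ≤ W)).card) := hT1.symm
      _ ≤ (q - 1) * (H.card * a) := Nat.mul_le_mul_left _ hTle
      _ = ((q - 1) * H.card) * a := (mul_assoc _ _ _).symm
      _ = (q ^ m - 1) * a := by rw [hHcount]
  · intro heq
    rw [hScard]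
    have hTeq : (∑ W ∈ H, (S.filter (fun L => L ≤ W)).card) = H.card * a := by
      have h : ∀ W ∈ H, (S.filter (fun L => L ≤ W)).card = a := by
        intro W hW
        simp only [hH, Finset.mem_filter, Finset.mem_univ, true_and] at hW
        rw [hcW W hW]
        exact heq W hW
      rw [Finset.sum_congr rfl h, Finset.sum_const, smul_eq_mul]
    calc (q ^ (m - l) - 1) * S.card
        = (q - 1) * (∑ W ∈ H, (S.filter (fun L => L ≤ W)).card) := hT1.symm
      _ = (q - 1) * (H.card * a) := by rw [hTeq]
      _ = ((q - 1) * H.card) * a := (mul_assoc _ _ _).symm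
      _ = (q ^ m - 1) * a := by rw [hHcount]
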